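/- arXiv:1311.3014 — 5 statements merged into one kernel-verified Lean document; each statement's English description precedes it below -/
import Mathlib

section
/- For every positive integer n, the identity ∑_{i=0}^{n-1} (n+i)!/i! = (2n)! / ((n+1)·(n-1)!) holds; equivalently, n·(2n)! = (n+1)! · ∑_{i=0}^{n-1} (n+i)!/i!. -/
open Finset Nat

lemma fact_div_eq (n i : ℕ) : Nat.factorial (n + i) / Nat.factorial i
    = (n + i).choose n * Nat.factorial n := by
  have h : n ≤ n + i := Nat.le_add_right n i
  have := Nat.choose_mul_factorial_mul_factorial h
  rw [Nat.add_sub_cancel_left] at this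
  rw [Nat.div_eq_of_eq_mul_left (Nat.factorial_pos i)]
  rw [← this]

lemma sum_choose_eq (n : ℕ) (hn : 1 ≤ n) :
    ∑ i ∈ Finset.range n, (n + i).choose n = (2 * n).choose (n + 1) := by
  have h1 : ∑ i ∈ Finset.range n, (n + i).choose n
      = ∑ j ∈ Finset.Ico n (2 * n), j.choose n := by
    rw [Finset.sum_Ico_eq_sum_range]
    simp [two_mul, Nat.add_sub_cancel_left, Nat.add_comm]
  have h2 : Finset.Ico n (2 * n) = Finset.Icc n (2 * n - 1) := by
    rw [← Finset.Ico_add_one_right_eq_Icc, Nat.sub_add_cancel (by omega)]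
  rw [h1, h2, Nat.sum_Icc_choose, Nat.sub_add_cancel (by omega)]

lemma key (n : ℕ) (hn : 1 ≤ n) :
    ∑ i ∈ Finset.range n, Nat.factorial (n + i) / Nat.factorial i
      = (2 * n).choose (n + 1) * Nat.factorial n := by
  simp_rw [fact_div_eq]
  rw [← Finset.sum_mul, sum_choose_eq n hn]

/-- For every positive integer `n`,
`∑_{i=0}^{n-1} (n+i)!/i! = (2n)! / ((n+1)·(n-1)!)`; equivalently,
`n·(2n)! = (n+1)! · ∑_{i=0}^{n-1} (n+i)!/i!`. -/
theorem sum_factorial_ratio_typeB (n : ℕ) (hn : 1 ≤ n) :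
    (∑ i ∈ Finset.range n, (Nat.factorial (n + i) : ℚ) / (Nat.factorial i : ℚ))
      = (Nat.factorial (2 * n) : ℚ) / (((n : ℚ) + 1) * (Nat.factorial (n - 1) : ℚ))
    ∧ n * Nat.factorial (2 * n)
      = Nat.factorial (n + 1) * ∑ i ∈ Finset.range n, Nat.factorial (n + i) / Nat.factorial i := by
  have hfact : (2 * n).choose (n + 1) * Nat.factorial (n + 1) * Nat.factorial (n - 1)
      = Nat.factorial (2 * n) := by
    have h : n + 1 ≤ 2 * n := by omega
    have := Nat.choose_mul_factorial_mul_factorial h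
    have h2 : 2 * n - (n + 1) = n - 1 := by omega
    rwa [h2] at this
  have hfn : Nat.factorial n = n * Nat.factorial (n - 1) := by
    conv_lhs => rw [show n = (n - 1) + 1 by omega]
    rw [Nat.factorial_succ]; congr 1; omega
  constructor
  · have hcast : ∀ i ∈ Finset.range n,
        (Nat.factorial (n + i) : ℚ) / (Nat.factorial i : ℚ)
          = ((Nat.factorial (n + i) / Nat.factorial i : ℕ) : ℚ) := by
      intro i _
      rw [Nat.cast_div (Nat.factorial_dvd_factorial (Nat.le_add_left i n))
        (by exact_mod_cast (Nat.factorial_pos i).ne')]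
    rw [Finset.sum_congr rfl hcast, ← Nat.cast_sum, key n hn]
    rw [← hfact]
    push_cast
    have hne1 : ((n : ℚ) + 1) ≠ 0 := by positivity
    have hne2 : (Nat.factorial (n - 1) : ℚ) ≠ 0 := by
      exact_mod_cast (Nat.factorial_pos _).ne'
    field_simp
    rw [Nat.factorial_succ]
    push_cast [hfn]
    ring
  · rw [key n hn, ← hfact, Nat.factorial_succ n, hfn]
    ring
end

section
/- For every integer n ≥ 2, ∑_{i=0}^{n-2} (n−1)·(n+i−2)!/i! = (2n−3)!/(n−2)!. -/
lemma hockey_typeD (m : ℕ) :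
    ∑ i ∈ Finset.range (m + 1), (m + i).choose i = (2 * m + 1).choose (m + 1) := by
  rw [← Nat.sum_Icc_choose (2 * m) m]
  refine Finset.sum_nbij' (fun i => m + i) (fun j => j - m) ?_ ?_ ?_ ?_ ?_
  · intro i hi; simp only [Finset.mem_range] at hi; simp only [Finset.mem_Icc]; omega
  · intro j hj; simp only [Finset.mem_Icc] at hj; simp only [Finset.mem_range]; omega
  · intro i hi; omega
  · intro j hj; simp only [Finset.mem_Icc] at hj; omega
  · intro i hi
    show (m + i).choose i = (m + i).choose m
    rw [← Nat.choose_symm (by omega : i ≤ m + i), Nat.add_sub_cancel]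

/-- For every integer `n ≥ 2`, `∑_{i=0}^{n-2} (n−1)·(n+i−2)!/i! = (2n−3)!/(n−2)!`. -/
theorem sum_factorial_ratio_typeD (n : ℕ) (hn : 2 ≤ n) :
    (∑ i ∈ Finset.range (n - 1),
        ((n : ℚ) - 1) * (Nat.factorial (n + i - 2) : ℚ) / (Nat.factorial i : ℚ))
      = (Nat.factorial (2 * n - 3) : ℚ) / (Nat.factorial (n - 2) : ℚ) := by
  obtain ⟨m, rfl⟩ : ∃ m, n = m + 2 := ⟨n - 2, by omega⟩
  have h2 : 2 * (m + 2) - 3 = 2 * m + 1 := by omega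
  have h3 : m + 2 - 1 = m + 1 := by omega
  have h4 : m + 2 - 2 = m := by omega
  rw [h2, h3, h4]
  have key : ∀ i ∈ Finset.range (m + 1),
      (((m + 2 : ℕ) : ℚ) - 1) * (Nat.factorial (m + 2 + i - 2) : ℚ) / (Nat.factorial i : ℚ)
        = ((Nat.factorial (m + 1) : ℚ)) * ((m + i).choose i : ℚ) := by
    intro i _
    have hi : m + 2 + i - 2 = m + i := by omega
    rw [hi, Nat.cast_choose ℚ (by omega : i ≤ m + i), Nat.add_sub_cancel]
    rw [Nat.factorial_succ]
    have h1 : (Nat.factorial i : ℚ) ≠ 0 := Nat.cast_ne_zero.mpr (Nat.factorial_ne_zero i)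
    have hm : (Nat.factorial m : ℚ) ≠ 0 := Nat.cast_ne_zero.mpr (Nat.factorial_ne_zero m)
    field_simp
    push_cast
    ring
  rw [Finset.sum_congr rfl key, ← Finset.mul_sum]
  have : ∑ i ∈ Finset.range (m + 1), ((m + i).choose i : ℚ)
      = ((2 * m + 1).choose (m + 1) : ℚ) := by
    rw [← Nat.cast_sum]
    exact_mod_cast congrArg (Nat.cast : ℕ → ℚ) (hockey_typeD m)
  rw [this, Nat.cast_choose ℚ (by omega : m + 1 ≤ 2 * m + 1)]
  have h5 : 2 * m + 1 - (m + 1) = m := by omega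
  rw [h5]
  have h1 : (Nat.factorial (m + 1) : ℚ) ≠ 0 := Nat.cast_ne_zero.mpr (Nat.factorial_ne_zero _)
  have hm : (Nat.factorial m : ℚ) ≠ 0 := Nat.cast_ne_zero.mpr (Nat.factorial_ne_zero m)
  field_simp
end

section
/- In the Weyl group W = S_{n+1} of type A_n with longest element w_0 written in the staircase reduced word (rows s_1⋯s_n, s_1⋯s_{n−1}, …, s_1), the number of positions h in this word at which the letter s_i occurs is n − i + 1, and summing the heights of the roots r(h, w_0) over these positions gives (n − i + 1)·i. -/
/-- The simple root `α_{k+1} = e_{k} − e_{k+1}` of type `Aₙ` (0-based index `k`),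
as an integer vector in `ℤ^{n+1}`. -/
def alphaA (n k : ℕ) : Fin (n + 1) → ℤ := fun x =>
  if (x : ℕ) = k then 1 else if (x : ℕ) = k + 1 then -1 else 0

open Fin.NatCast in
/-- The simple reflection `s_{b+1}` of `S_{n+1}` (0-based index `b`). -/
def swA (n b : ℕ) : Equiv.Perm (Fin (n + 1)) :=
  Equiv.swap (b : Fin (n + 1)) ((b + 1 : ℕ) : Fin (n + 1))

/-- The staircase reduced word for the longest element `w₀` of the type `Aₙ` Weyl group
(0-based letters). -/
def staircase (n : ℕ) : List ℕ := (List.range n).flatMap fun m => List.range (n - m)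

open Fin.NatCast in
/-- The height of a vector `v ∈ ℤ^{n+1}` written as `∑ cₖ αₖ` in the simple-root basis of
type `Aₙ`: the sum of the coefficients, `cₖ` being the partial sum of the coordinates. -/
def htA (n : ℕ) (v : Fin (n + 1) → ℤ) : ℤ :=
  ∑ k ∈ Finset.range n, ∑ x ∈ Finset.range (k + 1), v (x : Fin (n + 1))

open Fin.NatCast

/-! ### Auxiliary machinery -/

/-- Truncated staircase: the first `a` rows. -/
def Tl (n a : ℕ) : List ℕ := (List.range a).flatMap fun m => List.range (n - m)

lemma Tl_succ (n a : ℕ) : Tl n (a + 1) = Tl n a ++ List.range (n - a) := by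
  simp [Tl, List.range_succ]

lemma Tl_prefix (n : ℕ) {a a' : ℕ} (h : a ≤ a') : Tl n a <+: Tl n a' := by
  induction h with
  | refl => exact List.prefix_refl _
  | step _ ih => exact ih.trans (by rw [Tl_succ]; exact List.prefix_append _ _)

lemma getD_full (n a h : ℕ) (ha : a ≤ n) (hh : h < (Tl n a).length) :
    (Tl n n).getD h 0 = (Tl n a).getD h 0 := by
  obtain ⟨t, ht⟩ := Tl_prefix n ha
  rw [← ht, List.getD_append _ _ _ _ hh]

lemma cyc_apply (n : ℕ) : ∀ b ≤ n, ∀ x : Fin (n + 1),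
    ((((List.range b).map (swA n)).prod x : Fin (n + 1)) : ℕ) =
      if (x : ℕ) < b then (x : ℕ) + 1 else if (x : ℕ) = b then 0 else (x : ℕ) := by
  intro b
  induction b with
  | zero =>
    intro _ x
    simp only [List.range_zero, List.map_nil, List.prod_nil, Equiv.Perm.one_apply]
    split_ifs <;> omega
  | succ b ih =>
    intro hb x
    rw [List.range_succ, List.map_append, List.prod_append]
    simp only [List.map_cons, List.map_nil, List.prod_cons, List.prod_nil, mul_one]
    rw [Equiv.Perm.mul_apply]
    have hvb : ((b : Fin (n + 1)) : ℕ) = b := Fin.val_cast_of_lt (by omega)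
    have hvb1 : (((b + 1 : ℕ) : Fin (n + 1)) : ℕ) = b + 1 := Fin.val_cast_of_lt (by omega)
    have hx := x.isLt
    rcases eq_or_ne (x : ℕ) b with h | h
    · have hxe : x = (b : Fin (n + 1)) := Fin.ext (by omega)
      rw [hxe, swA, Equiv.swap_apply_left, ih (by omega), hvb1]
      split_ifs <;> omega
    · rcases eq_or_ne (x : ℕ) (b + 1) with h' | h'
      · have hxe : x = ((b + 1 : ℕ) : Fin (n + 1)) := Fin.ext (by omega)
        rw [hxe, swA, Equiv.swap_apply_right, ih (by omega), hvb]
        split_ifs <;> omega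
      · rw [swA, Equiv.swap_apply_of_ne_of_ne
          (fun hc => h (by rw [hc, hvb]))
          (fun hc => h' (by rw [hc, hvb1])), ih (by omega)]
        split_ifs <;> omega

lemma Q_apply (n : ℕ) : ∀ a ≤ n, ∀ x : Fin (n + 1),
    ((((Tl n a).map (swA n)).prod x : Fin (n + 1)) : ℕ) =
      if (x : ℕ) ≤ n - a then (x : ℕ) + a else n - (x : ℕ) := by
  intro a
  induction a with
  | zero =>
    intro _ x
    have hx := x.isLt
    simp only [Tl, List.range_zero, List.flatMap_nil, List.map_nil, List.prod_nil,
      Equiv.Perm.one_apply]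
    split_ifs <;> omega
  | succ a ih =>
    intro ha x
    rw [Tl_succ, List.map_append, List.prod_append, Equiv.Perm.mul_apply]
    have h1 := cyc_apply n (n - a) (Nat.sub_le _ _) x
    have h2 := ih (by omega) (((List.range (n - a)).map (swA n)).prod x)
    rw [h1] at h2
    rw [h2]
    have hx := x.isLt
    split_ifs <;> omega

lemma sum_indic (p : ℕ) : ∀ n, p ≤ n →
    ∑ k ∈ Finset.range n, (if p ≤ k then (1 : ℤ) else 0) = (n : ℤ) - p := by
  intro n
  induction n with
  | zero => intro h; interval_cases p; simp
  | succ n ih =>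
    intro h
    rw [Finset.sum_range_succ]
    rcases Nat.lt_or_ge p (n + 1) with h' | h'
    · have hpn : p ≤ n := by omega
      rw [ih hpn, if_pos hpn]
      push_cast; ring
    · have hp : p = n + 1 := by omega
      subst hp
      rw [if_neg (by omega), Finset.sum_eq_zero (fun k hk => by
        rw [if_neg]; simp only [Finset.mem_range] at hk; omega)]
      push_cast; ring

lemma htA_eval (n b : ℕ) (hb : b < n) (P : Equiv.Perm (Fin (n + 1))) :
    htA n (fun x => alphaA n b (P⁻¹ x))
      = (((P ((b + 1 : ℕ) : Fin (n + 1))) : ℕ) : ℤ) - (((P (b : Fin (n + 1))) : ℕ) : ℤ) := by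
  set p := ((P (b : Fin (n + 1))) : ℕ) with hpdef
  set q := ((P ((b + 1 : ℕ) : Fin (n + 1))) : ℕ) with hqdef
  have hvb : ((b : Fin (n + 1)) : ℕ) = b := Fin.val_cast_of_lt (by omega)
  have hvb1 : (((b + 1 : ℕ) : Fin (n + 1)) : ℕ) = b + 1 := Fin.val_cast_of_lt (by omega)
  have hpq : p ≠ q := by
    intro h
    have h2 : P (b : Fin (n + 1)) = P ((b + 1 : ℕ) : Fin (n + 1)) := Fin.ext h
    have h3 := P.injective h2
    have := congrArg Fin.val h3
    rw [hvb, hvb1] at this; omega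
  have hp : p ≤ n := by have := (P (b : Fin (n + 1))).isLt; omega
  have hq : q ≤ n := by have := (P ((b + 1 : ℕ) : Fin (n + 1))).isLt; omega
  unfold htA
  have inner : ∀ k ∈ Finset.range n,
      (∑ x ∈ Finset.range (k + 1), alphaA n b (P⁻¹ ((x : ℕ) : Fin (n + 1))))
        = (if p ≤ k then (1 : ℤ) else 0) - (if q ≤ k then (1 : ℤ) else 0) := by
    intro k hk
    simp only [Finset.mem_range] at hk
    have step : ∀ x ∈ Finset.range (k + 1), alphaA n b (P⁻¹ ((x : ℕ) : Fin (n + 1)))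
        = (if x = p then (1 : ℤ) else 0) - (if x = q then (1 : ℤ) else 0) := by
      intro x hx
      simp only [Finset.mem_range] at hx
      have hxv : (((x : ℕ) : Fin (n + 1)) : ℕ) = x := Fin.val_cast_of_lt (by omega)
      have e1 : (((P⁻¹ ((x : ℕ) : Fin (n + 1))) : Fin (n + 1)) : ℕ) = b ↔ x = p := by
        constructor
        · intro h
          have h2 : P⁻¹ ((x : ℕ) : Fin (n + 1)) = (b : Fin (n + 1)) := Fin.ext (by omega)
          have h3 := congrArg P h2
          rw [show ∀ y, P (P⁻¹ y) = y from P.apply_symm_apply] at h3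
          have := congrArg Fin.val h3
          omega
        · intro h
          have h2 : ((x : ℕ) : Fin (n + 1)) = P (b : Fin (n + 1)) := Fin.ext (by omega)
          rw [h2, show ∀ y, P⁻¹ (P y) = y from P.symm_apply_apply, hvb]
      have e2 : (((P⁻¹ ((x : ℕ) : Fin (n + 1))) : Fin (n + 1)) : ℕ) = b + 1 ↔ x = q := by
        constructor
        · intro h
          have h2 : P⁻¹ ((x : ℕ) : Fin (n + 1)) = ((b + 1 : ℕ) : Fin (n + 1)) :=
            Fin.ext (by omega)
          have h3 := congrArg P h2
          rw [show ∀ y, P (P⁻¹ y) = y from P.apply_symm_apply] at h3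
          have := congrArg Fin.val h3
          omega
        · intro h
          have h2 : ((x : ℕ) : Fin (n + 1)) = P ((b + 1 : ℕ) : Fin (n + 1)) :=
            Fin.ext (by omega)
          rw [h2, show ∀ y, P⁻¹ (P y) = y from P.symm_apply_apply, hvb1]
      unfold alphaA
      rcases eq_or_ne x p with h | h
      · rw [if_pos (e1.mpr h), if_pos h, if_neg (fun hc => hpq (h.symm.trans hc))]
        ring
      · rw [if_neg (fun hc => h (e1.mp hc)), if_neg h]
        rcases eq_or_ne x q with h' | h'
        · rw [if_pos (e2.mpr h'), if_pos h']; ring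
        · rw [if_neg (fun hc => h' (e2.mp hc)), if_neg h']; ring
    rw [Finset.sum_congr rfl step, Finset.sum_sub_distrib,
      Finset.sum_ite_eq' (Finset.range (k + 1)) p (fun _ => (1 : ℤ)),
      Finset.sum_ite_eq' (Finset.range (k + 1)) q (fun _ => (1 : ℤ))]
    simp only [Finset.mem_range]
    congr 1 <;> (split_ifs <;> first | rfl | omega)
  rw [Finset.sum_congr rfl inner, Finset.sum_sub_distrib, sum_indic p n hp, sum_indic q n hq]
  ring

lemma main_lemma (n b : ℕ) (hb : b < n) : ∀ a, a ≤ n →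
    (((Finset.range (Tl n a).length).filter fun h => (Tl n n).getD h 0 = b).card
        = min a (n - b))
    ∧ ((∑ h ∈ (Finset.range (Tl n a).length).filter (fun h => (Tl n n).getD h 0 = b),
          htA n (fun x => alphaA n b (((((Tl n n).take h).map (swA n)).prod)⁻¹ x)))
        = ((min a (n - b) : ℕ) : ℤ) * ((b : ℤ) + 1)) := by
  intro a
  induction a with
  | zero =>
    intro _
    refine ⟨by simp [Tl], by simp [Tl]⟩
  | succ a ih =>
    intro ha
    obtain ⟨ihc, ihs⟩ := ih (by omega)
    set L := (Tl n a).length with hL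
    have hlen : (Tl n (a + 1)).length = L + (n - a) := by
      rw [Tl_succ]; simp [hL]
    have hnew : ∀ j < n - a, (Tl n n).getD (L + j) 0 = j := by
      intro j hj
      rw [getD_full n (a + 1) _ ha (by omega), Tl_succ,
        List.getD_append_right _ _ _ _ (by omega)]
      rw [Nat.add_sub_cancel_left]
      rw [List.getD_eq_getElem _ _ (by simpa using hj), List.getElem_range]
    by_cases hba : b < n - a
    · have hsplit : (Finset.range (Tl n (a + 1)).length).filter
            (fun h => (Tl n n).getD h 0 = b)
          = insert (L + b) ((Finset.range L).filter fun h => (Tl n n).getD h 0 = b) := by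
        ext h
        simp only [Finset.mem_insert, Finset.mem_filter, Finset.mem_range, hlen]
        constructor
        · rintro ⟨hhr, hhd⟩
          by_cases hhL : h < L
          · exact Or.inr ⟨hhL, hhd⟩
          · left
            have haux := hnew (h - L) (by omega)
            rw [Nat.add_sub_cancel' (by omega)] at haux
            have : h - L = b := haux.symm.trans hhd
            omega
        · rintro (rfl | ⟨hhL, hhd⟩)
          · exact ⟨by omega, hnew b hba⟩
          · exact ⟨by omega, hhd⟩
      have hnotmem : L + b ∉ (Finset.range L).filter fun h => (Tl n n).getD h 0 = b := by
        simp only [Finset.mem_filter, Finset.mem_range]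
        rintro ⟨hc, -⟩; omega
      have htake : (Tl n n).take (L + b) = Tl n a ++ List.range b := by
        obtain ⟨t, ht⟩ := Tl_prefix n ha
        rw [← ht, List.take_append_of_le_length (by omega), Tl_succ,
          List.take_append, List.take_of_length_le (by omega),
          Nat.add_sub_cancel_left, List.take_range, Nat.min_eq_left (by omega)]
      have hval : htA n (fun x => alphaA n b
            (((((Tl n n).take (L + b)).map (swA n)).prod)⁻¹ x)) = (b : ℤ) + 1 := by
        rw [htake, List.map_append, List.prod_append, htA_eval n b hb]
        have c1 := cyc_apply n b hb.le (b : Fin (n + 1))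
        rw [Fin.val_cast_of_lt (show b < n + 1 by omega)] at c1
        rw [if_neg (by omega), if_pos rfl] at c1
        have q1 := Q_apply n a (by omega)
          ((((List.range b).map (swA n)).prod) (b : Fin (n + 1)))
        rw [c1, if_pos (by omega)] at q1
        have c2 := cyc_apply n b hb.le ((b + 1 : ℕ) : Fin (n + 1))
        rw [Fin.val_cast_of_lt (show b + 1 < n + 1 by omega)] at c2
        rw [if_neg (by omega), if_neg (by omega)] at c2
        have q2 := Q_apply n a (by omega)
          ((((List.range b).map (swA n)).prod) ((b + 1 : ℕ) : Fin (n + 1)))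
        rw [c2, if_pos (by omega)] at q2
        rw [Equiv.Perm.mul_apply, Equiv.Perm.mul_apply, q1, q2]
        push_cast; ring
      constructor
      · rw [hsplit, Finset.card_insert_of_notMem hnotmem, ihc]
        omega
      · rw [hsplit, Finset.sum_insert hnotmem, ihs, hval]
        have hm : min (a + 1) (n - b) = min a (n - b) + 1 := by omega
        rw [hm]
        push_cast; ring
    · have hsplit : (Finset.range (Tl n (a + 1)).length).filter
            (fun h => (Tl n n).getD h 0 = b)
          = (Finset.range L).filter fun h => (Tl n n).getD h 0 = b := by
        ext h
        simp only [Finset.mem_filter, Finset.mem_range, hlen]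
        constructor
        · rintro ⟨hhr, hhd⟩
          refine ⟨?_, hhd⟩
          by_contra hhL
          have haux := hnew (h - L) (by omega)
          rw [Nat.add_sub_cancel' (by omega)] at haux
          have : h - L = b := haux.symm.trans hhd
          omega
        · rintro ⟨hhr, hhd⟩
          exact ⟨by omega, hhd⟩
      have hm : min (a + 1) (n - b) = min a (n - b) := by omega
      rw [hsplit, hm]
      exact ⟨ihc, ihs⟩

/-- In `W = S_{n+1}` of type `Aₙ` with the staircase reduced word for `w₀`, the number of
positions `h` carrying the letter `sᵢ` is `n − i + 1`, and the sum of the heights of the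
roots `r(h, w₀)` over these positions is `(n − i + 1)·i`.  (`i` is 1-based.) -/
theorem typeA_staircase_letter_count_and_height_sum (n i : ℕ) (hi : 1 ≤ i) (hin : i ≤ n) :
    ((Finset.range (staircase n).length).filter
        fun h => (staircase n).getD h 0 = i - 1).card = n - i + 1
    ∧ (∑ h ∈ (Finset.range (staircase n).length).filter
          (fun h => (staircase n).getD h 0 = i - 1),
        htA n (fun x => alphaA n (i - 1)
          (((((staircase n).take h).map (swA n)).prod)⁻¹ x)))
      = ((n : ℤ) - i + 1) * i := by
  have hst : staircase n = Tl n n := rfl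
  have hb : i - 1 < n := by omega
  obtain ⟨hc, hs⟩ := main_lemma n (i - 1) hb n le_rfl
  simp only [hst]
  constructor
  · rw [hc]; omega
  · rw [hs]
    have e1 : ((min n (n - (i - 1)) : ℕ) : ℤ) = (n : ℤ) - i + 1 := by omega
    have e2 : (((i - 1 : ℕ) : ℤ) + 1) = (i : ℤ) := by omega
    rw [e1, e2]
end

section
/- Let W be a Coxeter group, let J and K be disjoint subsets of the simple reflections such that every element of J commutes with every element of K. Fix a reduced word w̃ for an element w ∈ W, and fix v_J ∈ W_J and v_K ∈ W_K. Then a subword b of w̃ is a reduced word for v_J · v_K of length ℓ(v_J) + ℓ(v_K) if and only if b = b_J ∪ b_K (union of index sets) for subwords b_J and b_K of w̃ that are reduced words for v_J and v_K respectively. -/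
open Real

namespace CoxAux

variable {B : Type*} (M : CoxeterMatrix B)

noncomputable def kf (b c : B) : ℝ := - Real.cos (Real.pi / (M b c : ℝ))

lemma kf_self (b : B) : kf M b b = 1 := by
  simp [kf, M.diagonal b]

lemma kf_symm (b c : B) : kf M b c = kf M c b := by
  simp [kf, M.symmetric b c]

noncomputable def bform (b : B) : (B →₀ ℝ) →ₗ[ℝ] ℝ :=
  Finsupp.linearCombination ℝ (fun c => kf M b c)

lemma bform_single (b c : B) : bform M b (Finsupp.single c 1) = kf M b c := by
  simp [bform, Finsupp.linearCombination_single]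

noncomputable def grefl (b : B) : Module.End ℝ (B →₀ ℝ) :=
  LinearMap.id - (2:ℝ) • (bform M b).smulRight (Finsupp.single b 1)

lemma grefl_apply (b : B) (v : B →₀ ℝ) :
    grefl M b v = v - (2 * bform M b v) • Finsupp.single b 1 := by
  simp [grefl, mul_smul]

lemma bform_grefl (b c : B) (v : B →₀ ℝ) :
    bform M b (grefl M c v) = bform M b v - 2 * bform M c v * kf M b c := by
  rw [grefl_apply, map_sub, map_smul, bform_single]
  ring_nf

lemma grefl_sq (b : B) : grefl M b * grefl M b = 1 := by
  apply LinearMap.ext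
  intro v
  show grefl M b (grefl M b v) = v
  rw [grefl_apply, grefl_apply M b v, map_sub, map_smul, bform_single, kf_self]
  simp only [smul_eq_mul]
  module

end CoxAux

namespace CoxAux

section Dihedral

variable {B : Type*} (M : CoxeterMatrix B) (b c : B)

local notation "eb" => Finsupp.single b (1:ℝ)
local notation "ec" => Finsupp.single c (1:ℝ)

lemma grefl_pow_eq_one (hm : 2 ≤ M b c) :
    (grefl M b * grefl M c) ^ (M b c) = 1 := by
  set m : ℕ := M b c with hmdef
  set θ : ℝ := Real.pi / m with hθ
  have hm2 : (2:ℝ) ≤ (m:ℝ) := by exact_mod_cast hm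
  have hθpos : 0 < θ := div_pos Real.pi_pos (by linarith)
  have hθlt : θ < Real.pi := by
    rw [hθ, div_lt_iff₀ (by linarith)]
    nlinarith [Real.pi_pos]
  have hs : Real.sin θ ≠ 0 := ne_of_gt (Real.sin_pos_of_pos_of_lt_pi hθpos hθlt)
  set cθ : ℝ := Real.cos θ with hcθ
  set u : ℤ → ℝ := fun n => Real.sin ((n:ℝ) * θ) / Real.sin θ with hu
  have hrec : ∀ n : ℤ, u (n+2) = 2 * cθ * u (n+1) - u n := by
    intro n
    have h : ((n+2:ℤ):ℝ) * θ = ((n+1:ℤ):ℝ)*θ + θ := by push_cast; ring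
    have h' : ((n:ℤ):ℝ) * θ = ((n+1:ℤ):ℝ)*θ - θ := by push_cast; ring
    simp only [hu, h, h']
    field_simp
    rw [show θ * (((n+1:ℤ):ℝ) + 1) = ((n+1:ℤ):ℝ)*θ + θ by ring,
      show θ * (((n+1:ℤ):ℝ) - 1) = ((n+1:ℤ):ℝ)*θ - θ by ring, Real.sin_add, Real.sin_sub]
    ring
  have hu0 : u 0 = 0 := by simp [hu]
  have hu1 : u 1 = 1 := by simp [hu, div_self hs]
  have hun1 : u (-1) = -1 := by
    simp only [hu, Int.cast_neg, Int.cast_one, neg_mul, one_mul, Real.sin_neg]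
    field_simp
  have humθ : (m:ℝ) * θ = Real.pi := by rw [hθ]; field_simp
  have hu2m : ∀ n : ℤ, u (2*(m:ℤ) + n) = u n := by
    intro n
    have h : ((2*(m:ℤ) + n : ℤ):ℝ) * θ = (n:ℝ)*θ + 2*Real.pi := by
      push_cast
      rw [add_mul, show (2:ℝ) * (m:ℝ) * θ = 2 * ((m:ℝ)*θ) by ring, humθ]
      ring
    simp only [hu, h, Real.sin_add_two_pi]
  -- values of the bilinear form
  have hkbc : kf M b c = -cθ := by rw [kf, ← hmdef, ← hθ, hcθ]
  have hkcb : kf M c b = -cθ := by rw [kf_symm, hkbc]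
  have hbb : bform M b (eb) = 1 := by rw [bform_single, kf_self]
  have hcc : bform M c (ec) = 1 := by rw [bform_single, kf_self]
  have hbc' : bform M b (ec) = -cθ := by rw [bform_single, hkbc]
  have hcb' : bform M c (eb) = -cθ := by rw [bform_single, hkcb]
  -- basic images
  have hb_eb : grefl M b (eb) = eb - (2:ℝ) • eb := by
    rw [grefl_apply, hbb]; norm_num
  have hb_ec : grefl M b (ec) = ec + (2*cθ) • eb := by
    rw [grefl_apply, hbc']; module
  have hc_eb : grefl M c (eb) = eb + (2*cθ) • ec := by
    rw [grefl_apply, hcb']; module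
  have hc_ec : grefl M c (ec) = ec - (2:ℝ) • ec := by
    rw [grefl_apply, hcc]; norm_num
  set A : Module.End ℝ (B →₀ ℝ) := grefl M b * grefl M c with hA
  have hAeb : A (eb) = (4*cθ^2-1) • eb + (2*cθ) • ec := by
    show grefl M b (grefl M c (eb)) = _
    rw [hc_eb, map_add, map_smul, hb_eb, hb_ec]
    module
  have hAec : A (ec) = (-(2*cθ)) • eb + (-1 : ℝ) • ec := by
    show grefl M b (grefl M c (ec)) = _
    rw [hc_ec, map_sub, map_smul, hb_ec]
    module
  -- powers on the plane
  have hpow_eb : ∀ p : ℕ, (A ^ p) (eb) = u (2*(p:ℤ)+1) • eb + u (2*(p:ℤ)) • ec := by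
    intro p
    induction p with
    | zero => norm_num [hu1, hu0]
    | succ p ih =>
      have e2 : u (2*(p:ℤ)+2) = 2*cθ * u (2*(p:ℤ)+1) - u (2*(p:ℤ)) := hrec _
      have e1 : u (2*(p:ℤ)+3) = (4*cθ^2-1) * u (2*(p:ℤ)+1) - 2*cθ * u (2*(p:ℤ)) := by
        have r2 := hrec (2*(p:ℤ)+1)
        rw [show (2*(p:ℤ)+1)+2 = 2*(p:ℤ)+3 by ring, show (2*(p:ℤ)+1)+1 = 2*(p:ℤ)+2 by ring] at r2
        linear_combination r2 + 2*cθ*e2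
      rw [pow_succ', Module.End.mul_apply, ih, map_add, map_smul, map_smul, hAeb, hAec]
      push_cast
      rw [show 2*((p:ℤ)+1)+1 = 2*(p:ℤ)+3 by ring, show 2*((p:ℤ)+1) = 2*(p:ℤ)+2 by ring,
        e1, e2]
      module
  have hpow_ec : ∀ p : ℕ, (A ^ p) (ec) = (-(u (2*(p:ℤ)))) • eb + (-(u (2*(p:ℤ)-1))) • ec := by
    intro p
    induction p with
    | zero =>
      rw [pow_zero, show 2*((0:ℕ):ℤ)-1 = -1 by norm_num, show 2*((0:ℕ):ℤ) = 0 by norm_num,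
        hu0, hun1]
      norm_num
    | succ p ih =>
      have r1 := hrec (2*(p:ℤ)-1)
      rw [show (2*(p:ℤ)-1)+2 = 2*(p:ℤ)+1 by ring, show (2*(p:ℤ)-1)+1 = 2*(p:ℤ) by ring] at r1
      have e2 : u (2*(p:ℤ)+2) = (4*cθ^2-1) * u (2*(p:ℤ)) - 2*cθ * u (2*(p:ℤ)-1) := by
        have r2 := hrec (2*(p:ℤ))
        rw [show (2*(p:ℤ))+2 = 2*(p:ℤ)+2 by ring, show (2*(p:ℤ))+1 = 2*(p:ℤ)+1 by ring] at r2
        linear_combination r2 + 2*cθ*r1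
      rw [pow_succ', Module.End.mul_apply, ih, map_add, map_smul, map_smul, hAeb, hAec,
        show ((p+1:ℕ):ℤ) = (p:ℤ)+1 by push_cast; ring,
        show 2*((p:ℤ)+1)-1 = 2*(p:ℤ)+1 by ring, show 2*((p:ℤ)+1) = 2*(p:ℤ)+2 by ring,
        e2, r1]
      module
  have hAm_eb : (A ^ m) (eb) = eb := by
    rw [hpow_eb m, hu2m 1, show (2*(m:ℤ)) = 2*(m:ℤ)+0 by ring, hu2m 0, hu1, hu0]
    norm_num
  have hAm_ec : (A ^ m) (ec) = ec := by
    have h1 : (2*(m:ℤ)-1) = 2*(m:ℤ) + (-1) := by ring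
    rw [hpow_ec m, h1, hu2m (-1), show (2*(m:ℤ)) = 2*(m:ℤ)+0 by ring, hu2m 0, hu0, hun1]
    norm_num
  -- fixed part
  have hfix : ∀ v : B →₀ ℝ, bform M b v = 0 → bform M c v = 0 → (A ^ m) v = v := by
    intro v h1 h2
    have hAv : A v = v := by
      show grefl M b (grefl M c v) = v
      rw [grefl_apply M c, h2, grefl_apply, map_sub]
      norm_num [h1]
    clear_value A
    induction m with
    | zero => simp
    | succ p ih => rw [pow_succ, Module.End.mul_apply, hAv, ih]
  -- decompose an arbitrary vector
  apply LinearMap.ext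
  intro v
  show (A ^ m) v = v
  have hcs : 1 - cθ^2 ≠ 0 := by
    have : Real.sin θ ^ 2 = 1 - cθ^2 := by
      rw [hcθ, Real.sin_sq]
    rw [← this]
    positivity
  set x : ℝ := (bform M b v + cθ * bform M c v)/(1-cθ^2) with hx
  set y : ℝ := (bform M c v + cθ * bform M b v)/(1-cθ^2) with hy
  set q : (B →₀ ℝ) := v - (x • eb + y • ec) with hq
  have hqb : bform M b q = 0 := by
    rw [hq, map_sub, map_add, map_smul, map_smul, hbb, hbc', hx, hy]
    simp only [smul_eq_mul]
    linear_combination (-(bform M b v)) * mul_inv_cancel₀ hcs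
  have hqc : bform M c q = 0 := by
    rw [hq, map_sub, map_add, map_smul, map_smul, hcb', hcc, hx, hy]
    simp only [smul_eq_mul]
    linear_combination (-(bform M c v)) * mul_inv_cancel₀ hcs
  have hv : v = x • eb + y • ec + q := by rw [hq]; abel
  rw [hv, map_add, map_add, map_smul, map_smul, hAm_eb, hAm_ec, hfix q hqb hqc]

end Dihedral

lemma grefl_liftable {B : Type*} (M : CoxeterMatrix B) : CoxeterMatrix.IsLiftable M (grefl M) := by
  intro i j
  rcases eq_or_ne i j with rfl | hij
  · rw [M.diagonal, pow_one, grefl_sq]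
  · rcases Nat.lt_or_ge (M i j) 2 with h | h
    · interval_cases h' : M.M i j
      · rw [pow_zero]
      · exact absurd h' (M.off_diagonal i j hij)
    · exact grefl_pow_eq_one M i j h

theorem simple_injective {B W : Type*} [Group W] {M : CoxeterMatrix B}
    (cs : CoxeterSystem M W) : Function.Injective cs.simple := by
  intro i j h
  by_contra hij
  have h2 : grefl M i = grefl M j := by
    have h1 : cs.lift ⟨grefl M, grefl_liftable M⟩ (cs.simple i)
        = cs.lift ⟨grefl M, grefl_liftable M⟩ (cs.simple j) := by rw [h]
    rwa [cs.lift_apply_simple, cs.lift_apply_simple] at h1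
  have h3 := congrArg (fun f : Module.End ℝ (B →₀ ℝ) => (f (Finsupp.single i 1)) i) h2
  simp only [grefl_apply, Finsupp.sub_apply, Finsupp.smul_apply, Finsupp.single_eq_same,
    bform_single, kf_self, Finsupp.single_eq_of_ne hij, smul_eq_mul] at h3
  norm_num at h3

end CoxAux


noncomputable section
open scoped Classical

namespace CoxAux

open List

variable {B W : Type*} [Group W] {M : CoxeterMatrix B} (cs : CoxeterSystem M W)

lemma conj_invol_iff {G : Type*} [Group G] (a x y : G) (ha : a * a = 1) :
    a * x * a = y ↔ x = a * y * a := by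
  constructor
  · rintro rfl
    rw [← mul_assoc, ← mul_assoc, ha, one_mul, mul_assoc, ha, mul_one]
  · rintro rfl
    rw [← mul_assoc, ← mul_assoc, ha, one_mul, mul_assoc, ha, mul_one]

lemma conj_mul_iff {G : Type*} [Group G] (q x y : G) :
    q * x * q⁻¹ = y ↔ x = q⁻¹ * y * q := by
  constructor
  · rintro rfl; group
  · rintro rfl; group

/-- The function underlying the sign permutation attached to a simple reflection. -/
def sgnMap (i : B) : (W × ℤˣ) → (W × ℤˣ) := fun x =>
  (cs.simple i * x.1 * cs.simple i, x.2 * (if x.1 = cs.simple i then -1 else 1))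

lemma sgnMap_involutive (i : B) : Function.Involutive (sgnMap cs i) := by
  rintro ⟨t, ε⟩
  simp only [sgnMap]
  have hs : cs.simple i * cs.simple i = 1 := cs.simple_mul_simple_self i
  have h1 : cs.simple i * (cs.simple i * t * cs.simple i) * cs.simple i = t := by
    rw [← mul_assoc, ← mul_assoc, hs, one_mul, mul_assoc, hs, mul_one]
  have h2 : (cs.simple i * t * cs.simple i = cs.simple i) ↔ (t = cs.simple i) := by
    rw [conj_invol_iff _ _ _ hs, hs, one_mul]
  ext
  · exact h1
  · by_cases h : t = cs.simple i
    · simp [h2, h]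
    · simp [h2, h]

/-- The sign permutation attached to a simple reflection. -/
def sgnPerm (i : B) : Equiv.Perm (W × ℤˣ) := (sgnMap_involutive cs i).toPerm

lemma sgnPerm_apply (i : B) (t : W) (ε : ℤˣ) :
    sgnPerm cs i (t, ε) = (cs.simple i * t * cs.simple i,
      ε * (if t = cs.simple i then -1 else 1)) := rfl

lemma invol_conj_conj {G : Type*} [Group G] (a x : G) (ha : a * a = 1) :
    a * (a * x * a) * a = x := by
  rw [← mul_assoc, ← mul_assoc, ha, one_mul, mul_assoc, ha, mul_one]

/-- A conjugation computation in a group. -/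
lemma conj_iff_sq {G : Type*} [Group G] (sj t q : G) (hs : sj * sj = 1)
    (hq : sj * q * sj = q⁻¹) :
    q * t * q⁻¹ = sj ↔ q * q = sj * t⁻¹ := by
  have hsinv : sj⁻¹ = sj := by
    rw [← mul_one sj⁻¹, ← hs, ← mul_assoc, inv_mul_cancel, one_mul]
  have hq' : sj * q⁻¹ * sj = q := by rw [← hq, invol_conj_conj _ _ hs]
  constructor
  · intro h
    have ht : t = q⁻¹ * sj * q := by rw [← h]; group
    have htinv : t⁻¹ = q⁻¹ * sj * q := by
      rw [ht, mul_inv_rev, mul_inv_rev, inv_inv, hsinv, ← mul_assoc]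
    rw [htinv, show sj * (q⁻¹ * sj * q) = (sj * q⁻¹ * sj) * q by group, hq']
  · intro h
    have ht' : t = (q * q)⁻¹ * sj := by
      have ht : t⁻¹ = sj * (q * q) := by
        rw [h, ← mul_assoc, hs, one_mul]
      have h3 := congrArg (·⁻¹) ht
      simp only [inv_inv, mul_inv_rev, hsinv] at h3
      rw [h3, mul_inv_rev]
    have h5 : sj * q⁻¹ = q * sj := by
      calc sj * q⁻¹ = (sj * q⁻¹ * sj) * sj := by rw [mul_assoc, hs, mul_one]
      _ = q * sj := by rw [hq']
    rw [ht', show q * ((q * q)⁻¹ * sj) * q⁻¹ = q⁻¹ * (sj * q⁻¹) by group, h5,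
      ← mul_assoc, inv_mul_cancel, one_mul]

lemma sgnPerm_liftable : CoxeterMatrix.IsLiftable M (sgnPerm cs) := by
  intro i j
  set m : ℕ := M i j with hm
  set u : W := cs.simple i * cs.simple j with hu
  have hum : u ^ m = 1 := cs.simple_mul_simple_pow i j
  have hsi : cs.simple i * cs.simple i = 1 := cs.simple_mul_simple_self i
  have hsj : cs.simple j * cs.simple j = 1 := cs.simple_mul_simple_self j
  have huinv : u⁻¹ = cs.simple j * cs.simple i := by
    rw [hu, mul_inv_rev, cs.inv_simple, cs.inv_simple]
  have hju : cs.simple j * u * cs.simple j = u⁻¹ := by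
    rw [hu, huinv, mul_assoc, mul_assoc, cs.simple_mul_simple_self, mul_one]
  have hiu : cs.simple i * u * cs.simple i = u⁻¹ := by
    rw [hu, huinv, ← mul_assoc, cs.simple_mul_simple_self, one_mul]
  have hju_pow : ∀ p : ℕ, cs.simple j * u ^ p * cs.simple j = (u ^ p)⁻¹ := by
    intro p
    calc cs.simple j * u ^ p * cs.simple j = (cs.simple j * u * (cs.simple j)⁻¹) ^ p := by
          rw [conj_pow, cs.inv_simple]
    _ = (u⁻¹) ^ p := by rw [cs.inv_simple, hju]
    _ = (u ^ p)⁻¹ := by rw [inv_pow]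
  have hiu_pow : ∀ p : ℕ, cs.simple i * u ^ p * cs.simple i = (u ^ p)⁻¹ := by
    intro p
    calc cs.simple i * u ^ p * cs.simple i = (cs.simple i * u * (cs.simple i)⁻¹) ^ p := by
          rw [conj_pow, cs.inv_simple]
    _ = (u⁻¹) ^ p := by rw [cs.inv_simple, hiu]
    _ = (u ^ p)⁻¹ := by rw [inv_pow]
  have hE1 : cs.simple j * cs.simple i * cs.simple j = u⁻¹ * cs.simple i * u := by
    rw [huinv, hu]
    simp only [mul_assoc, cs.simple_mul_simple_cancel_left]
  have hE2 : u⁻¹ * cs.simple i = cs.simple j := by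
    rw [huinv, mul_assoc, cs.simple_mul_simple_self, mul_one]
  apply Equiv.ext
  rintro ⟨t, ε⟩
  set g : ℕ → ℤˣ := fun k => if u ^ k = cs.simple j * t⁻¹ then -1 else 1 with hg
  have key : ∀ p : ℕ, ((sgnPerm cs i * sgnPerm cs j) ^ p) (t, ε)
      = (u ^ p * t * (u ^ p)⁻¹, ε * ∏ k ∈ Finset.range (2*p), g k) := by
    intro p
    induction p with
    | zero => simp
    | succ p ih =>
      rw [pow_succ', Equiv.Perm.mul_apply, ih, Equiv.Perm.mul_apply, sgnPerm_apply,
        sgnPerm_apply]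
      have hC : (u ^ p * t * (u ^ p)⁻¹ = cs.simple j) ↔ (u ^ (2*p) = cs.simple j * t⁻¹) := by
        rw [show 2*p = p + p by ring, pow_add]
        exact conj_iff_sq (cs.simple j) t (u ^ p) hsj (hju_pow p)
      have hD : (cs.simple j * (u ^ p * t * (u ^ p)⁻¹) * cs.simple j = cs.simple i)
          ↔ (u ^ (2*p+1) = cs.simple j * t⁻¹) := by
        rw [conj_invol_iff _ _ _ hsj, hE1, ← conj_mul_iff]
        have harr : u * (u ^ p * t * (u ^ p)⁻¹) * u⁻¹
            = u ^ (p+1) * t * (u ^ (p+1))⁻¹ := by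
          rw [pow_succ']
          group
        rw [harr, conj_iff_sq (cs.simple i) t (u ^ (p+1)) hsi (hiu_pow (p+1))]
        have e1 : u⁻¹ * (u ^ (p+1) * u ^ (p+1)) = u ^ (2*p+1) := by
          rw [show 2*p+1 = p + (p+1) by ring, pow_add, pow_succ']
          group
        have e2 : u⁻¹ * (cs.simple i * t⁻¹) = cs.simple j * t⁻¹ := by
          rw [← mul_assoc, hE2]
        constructor
        · intro h
          rw [← e1, ← e2, h]
        · intro h
          exact mul_left_cancel ((e1.trans h).trans e2.symm)
      have hw : ∀ X : W, cs.simple i * (cs.simple j * X * cs.simple j) * cs.simple i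
          = u * X * u⁻¹ := by
        intro X; rw [hu, huinv]; group
      have hgC : (if u ^ p * t * (u ^ p)⁻¹ = cs.simple j then (-1 : ℤˣ) else 1)
          = g (2*p) := by
        rw [hg]; simp only [hC]
      have hgD : (if cs.simple j * (u ^ p * t * (u ^ p)⁻¹) * cs.simple j = cs.simple i
          then (-1:ℤˣ) else 1) = g (2*p+1) := by
        rw [hg]; simp only [hD]
      rw [Prod.mk.injEq]
      constructor
      · rw [hw]
        rw [pow_succ']
        group
      · rw [hgC, hgD, show 2*(p+1) = 2*p+1+1 by ring, Finset.prod_range_succ,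
          Finset.prod_range_succ]
        simp only [mul_assoc]
  have key_m := key m
  rw [hum] at key_m
  simp only [one_mul, inv_one, mul_one] at key_m
  rw [key_m]
  have hprod : ∏ k ∈ Finset.range (2*m), g k = 1 := by
    rw [show 2*m = m + m by ring, Finset.prod_range_add]
    have : ∀ k, g (m + k) = g k := by
      intro k
      rw [hg]
      simp only [pow_add, hum, one_mul]
    simp only [this]
    rw [← Finset.prod_mul_distrib]
    apply Finset.prod_eq_one
    intro k _
    rcases Int.units_eq_one_or (g k) with h | h <;> rw [h] <;> norm_num
  rw [hprod]
  simp

/-- The sign representation of a Coxeter group. -/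
noncomputable def eta : W →* Equiv.Perm (W × ℤˣ) :=
  cs.lift ⟨sgnPerm cs, sgnPerm_liftable cs⟩

lemma eta_simple (i : B) : eta cs (cs.simple i) = sgnPerm cs i :=
  CoxeterSystem.lift_apply_simple cs (sgnPerm_liftable cs) i

lemma leftInvSeq_cons (i : B) (ω : List B) :
    cs.leftInvSeq (i :: ω)
      = cs.simple i :: List.map (MulAut.conj (cs.simple i)) (cs.leftInvSeq ω) := rfl

lemma eta_wordProd_inv (ω : List B) (t : W) (ε : ℤˣ) :
    eta cs (cs.wordProd ω)⁻¹ (t, ε)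
      = ((cs.wordProd ω)⁻¹ * t * (cs.wordProd ω),
          ε * (-1) ^ (List.count t (cs.leftInvSeq ω))) := by
  induction ω generalizing t ε with
  | nil => simp [cs.wordProd_nil]
  | cons i ω ih =>
    have hconjval : (MulAut.conj (cs.simple i)) (cs.simple i * t * cs.simple i) = t := by
      simp only [MulAut.conj_apply, cs.inv_simple]
      exact invol_conj_conj _ _ (cs.simple_mul_simple_self i)
    have hcount : List.count t (cs.leftInvSeq (i :: ω))
        = List.count (cs.simple i * t * cs.simple i) (cs.leftInvSeq ω)
          + (if t = cs.simple i then 1 else 0) := by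
      rw [leftInvSeq_cons, List.count_cons]
      congr 1
      · have h := List.count_map_of_injective (cs.leftInvSeq ω) _
          (MulAut.conj (cs.simple i)).injective (cs.simple i * t * cs.simple i)
        rw [hconjval] at h
        exact h
      · by_cases h : t = cs.simple i
        · simp [h]
        · simp [h, Ne.symm h]
    rw [cs.wordProd_cons, mul_inv_rev, cs.inv_simple, map_mul, Equiv.Perm.mul_apply,
      eta_simple, sgnPerm_apply, ih, hcount]
    rw [Prod.mk.injEq]
    constructor
    · group
    · by_cases h : t = cs.simple i <;>
        simp [h, pow_add, mul_comm, mul_left_comm, mul_assoc]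

lemma eta_simple_self (i : B) :
    eta cs (cs.simple i) (cs.simple i, 1) = (cs.simple i, -1) := by
  rw [eta_simple, sgnPerm_apply, if_pos rfl, mul_assoc, cs.simple_mul_simple_self, mul_one,
    one_mul]

/-- Strong exchange property, for simple reflections: if left multiplication by `s i` shortens
`π ω` for a reduced word `ω`, then `s i` belongs to the left inversion sequence of `ω`. -/
theorem simple_mem_leftInvSeq_of_isLeftDescent {ω : List B} (hω : cs.IsReduced ω) {i : B}
    (hl : cs.length (cs.simple i * cs.wordProd ω) < cs.length (cs.wordProd ω)) :
    cs.simple i ∈ cs.leftInvSeq ω := by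
  by_contra hmem
  set w := cs.wordProd ω with hw
  obtain ⟨ω', hred', hw'⟩ := cs.exists_reduced_word' (cs.simple i * w)
  have h1 : eta cs (cs.simple i * w)⁻¹ (cs.simple i, 1)
      = ((cs.simple i * w)⁻¹ * cs.simple i * (cs.simple i * w),
          (1:ℤˣ) * (-1) ^ (List.count (cs.simple i) (cs.leftInvSeq ω'))) := by
    rw [hw']
    exact eta_wordProd_inv cs ω' _ _
  have h2 : eta cs (cs.simple i * w)⁻¹ (cs.simple i, 1)
      = eta cs w⁻¹ (cs.simple i, -1) := by
    rw [mul_inv_rev, cs.inv_simple, map_mul, Equiv.Perm.mul_apply, eta_simple_self]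
  have h3 : eta cs w⁻¹ (cs.simple i, -1)
      = (w⁻¹ * cs.simple i * w, (-1:ℤˣ) * (-1) ^ (List.count (cs.simple i)
          (cs.leftInvSeq ω))) := eta_wordProd_inv cs ω _ _
  have hc0 : List.count (cs.simple i) (cs.leftInvSeq ω) = 0 :=
    List.count_eq_zero_of_not_mem hmem
  have hsgn : (1:ℤˣ) * (-1) ^ (List.count (cs.simple i) (cs.leftInvSeq ω'))
      = (-1:ℤˣ) * (-1) ^ (List.count (cs.simple i) (cs.leftInvSeq ω)) := by
    have := (h1.symm.trans (h2.trans h3))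
    exact congrArg Prod.snd this
  rw [hc0, pow_zero, mul_one, one_mul] at hsgn
  have hodd : List.count (cs.simple i) (cs.leftInvSeq ω') ≠ 0 := by
    intro h
    rw [h, pow_zero] at hsgn
    norm_num at hsgn
  have hmem' : cs.simple i ∈ cs.leftInvSeq ω' := by
    rw [← List.count_pos_iff]
    omega
  have hinv := cs.isLeftInversion_of_mem_leftInvSeq hred' hmem'
  rw [← hw'] at hinv
  have := hinv.2
  rw [← mul_assoc, cs.simple_mul_simple_self, one_mul] at this
  omega

/-- Exchange property with explicit erased index. -/
theorem simple_exchange {ω : List B} (hω : cs.IsReduced ω) {i : B}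
    (hl : cs.length (cs.simple i * cs.wordProd ω) < cs.length (cs.wordProd ω)) :
    ∃ j, ∃ hj : j < ω.length,
      cs.simple i * cs.wordProd ω = cs.wordProd (ω.eraseIdx j) ∧
      cs.simple i = (cs.leftInvSeq ω).getD j 1 := by
  have hmem := simple_mem_leftInvSeq_of_isLeftDescent cs hω hl
  rw [List.mem_iff_getElem] at hmem
  obtain ⟨j, hjlt, hj⟩ := hmem
  have hjlt' : j < ω.length := by
    rwa [cs.length_leftInvSeq] at hjlt
  refine ⟨j, hjlt', ?_, ?_⟩
  · rw [← cs.getD_leftInvSeq_mul_wordProd ω j]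
    congr 1
    rw [List.getD_eq_getElem _ _ hjlt, hj]
  · rw [List.getD_eq_getElem _ _ hjlt, hj]


/-! ### Support of reduced words -/

lemma wordProd_mem_closure {J : Set B} {l : List B} (hl : ∀ a ∈ l, a ∈ J) :
    cs.wordProd l ∈ Subgroup.closure (cs.simple '' J) := by
  induction l with
  | nil =>
    rw [cs.wordProd_nil]
    exact Subgroup.one_mem _
  | cons a l ih =>
    rw [cs.wordProd_cons]
    exact mul_mem (Subgroup.subset_closure ⟨a, hl a (List.mem_cons_self), rfl⟩)
      (ih fun b hb => hl b (List.mem_cons_of_mem _ hb))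

lemma mem_closure_iff_word {J : Set B} (w : W) :
    w ∈ Subgroup.closure (cs.simple '' J)
      ↔ ∃ l : List B, (∀ a ∈ l, a ∈ J) ∧ cs.wordProd l = w := by
  constructor
  · intro h
    induction h using Subgroup.closure_induction with
    | mem x hx =>
      obtain ⟨j, hj, rfl⟩ := hx
      exact ⟨[j], by simpa using hj, cs.wordProd_singleton j⟩
    | one => exact ⟨[], by simp, cs.wordProd_nil⟩
    | mul x y hx hy ihx ihy =>
      obtain ⟨l1, h1, hp1⟩ := ihx
      obtain ⟨l2, h2, hp2⟩ := ihy
      exact ⟨l1 ++ l2, by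
        intro a ha
        rcases List.mem_append.mp ha with h | h
        exacts [h1 a h, h2 a h], by rw [cs.wordProd_append, hp1, hp2]⟩
    | inv x hx ih =>
      obtain ⟨l, h1, hp⟩ := ih
      exact ⟨l.reverse, fun a ha => h1 a (List.mem_reverse.mp ha),
        by rw [cs.wordProd_reverse, hp]⟩
  · rintro ⟨l, hl, rfl⟩
    exact wordProd_mem_closure cs hl

lemma isReduced_nil' : cs.IsReduced ([] : List B) := by
  simp [CoxeterSystem.IsReduced]

lemma exists_reduced_word_subset {J : Set B} {l : List B} (hl : ∀ a ∈ l, a ∈ J) :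
    ∃ r : List B, (∀ a ∈ r, a ∈ J) ∧ cs.IsReduced r ∧ cs.wordProd r = cs.wordProd l := by
  induction l with
  | nil => exact ⟨[], by simp, isReduced_nil' cs, rfl⟩
  | cons a l ih =>
    obtain ⟨r, hrJ, hrred, hrprod⟩ := ih (fun b hb => hl b (List.mem_cons_of_mem a hb))
    have haJ : a ∈ J := hl a (List.mem_cons_self)
    rcases lt_or_ge (cs.length (cs.simple a * cs.wordProd r)) (cs.length (cs.wordProd r))
      with hlt | hge
    · obtain ⟨j, hj, heq, -⟩ := simple_exchange cs hrred hlt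
      refine ⟨r.eraseIdx j, ?_, ?_, ?_⟩
      · intro b hb
        exact hrJ b ((List.eraseIdx_sublist r j).subset hb)
      · show cs.length (cs.wordProd (r.eraseIdx j)) = (r.eraseIdx j).length
        rw [← heq]
        have h1 : (r.eraseIdx j).length + 1 = r.length := List.length_eraseIdx_add_one hj
        have h2 : cs.length (cs.wordProd r) = r.length := hrred
        rcases cs.length_simple_mul (cs.wordProd r) a with h | h
        · omega
        · omega
      · rw [← heq, hrprod, cs.wordProd_cons]
    · refine ⟨a :: r, ?_, ?_, ?_⟩
      · intro b hb
        rcases List.mem_cons.mp hb with rfl | h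
        exacts [haJ, hrJ b h]
      · show cs.length (cs.wordProd (a :: r)) = (a :: r).length
        rw [cs.wordProd_cons]
        have h2 : cs.length (cs.wordProd r) = r.length := hrred
        rcases cs.length_simple_mul (cs.wordProd r) a with h | h
        · simp only [List.length_cons]
          omega
        · omega
      · rw [cs.wordProd_cons, hrprod, cs.wordProd_cons]

lemma support_aux {J : Set B} : ∀ (n : ℕ) (ω : List B), ω.length = n → cs.IsReduced ω →
    cs.wordProd ω ∈ Subgroup.closure (cs.simple '' J) → ∀ a ∈ ω, a ∈ J := by
  intro n
  induction n with
  | zero =>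
    intro ω hlen _ _ a ha
    rw [List.length_eq_zero_iff] at hlen
    subst hlen
    simp at ha
  | succ n ihn =>
    intro ω hlen hred hmem a ha
    obtain ⟨i, rest, rfl⟩ : ∃ i rest, ω = i :: rest := by
      cases ω with
      | nil => simp at hlen
      | cons i rest => exact ⟨i, rest, rfl⟩
    obtain ⟨lJ, hlJ, hprodJ⟩ := (mem_closure_iff_word cs _).mp hmem
    obtain ⟨r, hrJ, hrred, hrprod⟩ := exists_reduced_word_subset cs hlJ
    have hw : cs.wordProd r = cs.wordProd (i :: rest) := hrprod.trans hprodJ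
    have hlenred : cs.length (cs.wordProd (i :: rest)) = n + 1 := by
      have : cs.length (cs.wordProd (i :: rest)) = (i :: rest).length := hred
      omega
    have hrest_le : cs.length (cs.wordProd rest) ≤ n := by
      have := cs.length_wordProd_le rest
      simp only [List.length_cons, Nat.succ.injEq] at hlen
      omega
    have hsw : cs.simple i * cs.wordProd (i :: rest) = cs.wordProd rest := by
      rw [cs.wordProd_cons, ← mul_assoc, cs.simple_mul_simple_self, one_mul]
    have hlt : cs.length (cs.simple i * cs.wordProd r) < cs.length (cs.wordProd r) := by
      rw [hw, hsw]
      omega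
    obtain ⟨j, hj, heq, hgetD⟩ := simple_exchange cs hrred hlt
    have hsi_mem : cs.simple i ∈ Subgroup.closure (cs.simple '' J) := by
      rw [hgetD, cs.getD_leftInvSeq r j]
      refine mul_mem (mul_mem ?_ ?_) (inv_mem ?_)
      · exact wordProd_mem_closure cs fun b hb => hrJ b (List.take_subset j r hb)
      · have hsome : r[j]? = some (r.get ⟨j, hj⟩) := List.getElem?_eq_getElem hj
        rw [hsome]
        simp only [Option.map_some, Option.getD_some]
        exact Subgroup.subset_closure ⟨r.get ⟨j, hj⟩, hrJ _ (List.get_mem r ⟨j, hj⟩), rfl⟩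
      · exact wordProd_mem_closure cs fun b hb => hrJ b (List.take_subset j r hb)
    have hiJ : i ∈ J := by
      obtain ⟨l1, hl1, hprod1⟩ := (mem_closure_iff_word cs _).mp hsi_mem
      obtain ⟨r1, hr1J, hr1red, hr1prod⟩ := exists_reduced_word_subset cs hl1
      have hp1 : cs.wordProd r1 = cs.simple i := by rw [hr1prod, hprod1]
      have hlen1 : r1.length = 1 := by
        have h1 : cs.length (cs.wordProd r1) = r1.length := hr1red
        rw [hp1, cs.length_simple] at h1
        omega
      obtain ⟨b, rfl⟩ := List.length_eq_one_iff.mp hlen1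
      have hsb : cs.simple b = cs.simple i := by
        rw [← cs.wordProd_singleton b, hp1]
      have hbJ : b ∈ J := hr1J b (List.mem_singleton_self b)
      rwa [simple_injective cs hsb] at hbJ
    rcases List.mem_cons.mp ha with rfl | harest
    · exact hiJ
    · have hrestred : cs.IsReduced rest := by
        have := CoxeterSystem.IsReduced.drop (ω := i :: rest) hred (j := 1)
        simpa using this
      have hrestmem : cs.wordProd rest ∈ Subgroup.closure (cs.simple '' J) := by
        rw [← hsw]
        exact mul_mem hsi_mem hmem
      have hlenrest : rest.length = n := by
        simp only [List.length_cons] at hlen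
        omega
      exact ihn rest hlenrest hrestred hrestmem a harest

/-- Every letter of a reduced word of an element of a standard parabolic subgroup belongs
to the corresponding set of simple reflections. -/
lemma isReduced_word_letters {J : Set B} {ω : List B} (hred : cs.IsReduced ω)
    (hmem : cs.wordProd ω ∈ Subgroup.closure (cs.simple '' J)) : ∀ a ∈ ω, a ∈ J :=
  support_aux cs ω.length ω rfl hred hmem

lemma closure_inter_eq_one {J K : Set B} (hdisj : Disjoint J K) {w : W}
    (hJ : w ∈ Subgroup.closure (cs.simple '' J)) (hK : w ∈ Subgroup.closure (cs.simple '' K)) :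
    w = 1 := by
  obtain ⟨ωw, hredw, hprodw⟩ := cs.exists_reduced_word' w
  cases ωw with
  | nil => rw [hprodw, cs.wordProd_nil]
  | cons a l =>
    exfalso
    have haJ : a ∈ J := isReduced_word_letters cs hredw (hprodw ▸ hJ) a (List.mem_cons_self)
    have haK : a ∈ K := isReduced_word_letters cs hredw (hprodw ▸ hK) a (List.mem_cons_self)
    exact Set.disjoint_left.mp hdisj haJ haK

end CoxAux

/-- The subword of the word `ω` with index set `S`. -/
def subwordAt {B : Type*} (ω : List B) (S : Finset (Fin ω.length)) : List B :=
  (S.sort (· ≤ ·)).map ω.get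

namespace CoxAux

open List

variable {B W : Type*} [Group W] {M : CoxeterMatrix B} (cs : CoxeterSystem M W)

lemma length_subwordAt (ω : List B) (S : Finset (Fin ω.length)) :
    (subwordAt ω S).length = S.card := by
  simp [subwordAt]

lemma mem_subwordAt {ω : List B} {S : Finset (Fin ω.length)} {a : B} :
    a ∈ subwordAt ω S ↔ ∃ i ∈ S, ω.get i = a := by
  simp [subwordAt, Finset.mem_sort]

lemma sort_eq_append_max {n : ℕ} (S : Finset (Fin n)) (i : Fin n) (hi : i ∈ S)
    (hmax : ∀ j ∈ S, j ≤ i) :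
    S.sort (· ≤ ·) = (S.erase i).sort (· ≤ ·) ++ [i] := by
  apply fun h1 h2 => List.Perm.eq_of_pairwise' (Finset.pairwise_sort _ _) h2 h1
  · have h1 : S.sort (· ≤ ·) ~ S.toList := Finset.sort_perm_toList _ _
    have h2 : (S.erase i).sort (· ≤ ·) ~ (S.erase i).toList := Finset.sort_perm_toList _ _
    have h3 : S.toList ~ i :: (S.erase i).toList := by
      have h := Finset.toList_insert (Finset.notMem_erase i S)
      rwa [Finset.insert_erase hi] at h
    calc S.sort (· ≤ ·) ~ S.toList := h1
    _ ~ i :: (S.erase i).toList := h3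
    _ ~ i :: (S.erase i).sort (· ≤ ·) := (h2.symm.cons i)
    _ ~ (S.erase i).sort (· ≤ ·) ++ [i] := (List.perm_append_singleton i _).symm
  · apply List.pairwise_append.mpr
    refine ⟨Finset.pairwise_sort _ _, List.pairwise_singleton _ _, ?_⟩
    intro a ha b hb
    rw [List.mem_singleton] at hb
    subst hb
    exact hmax a (Finset.mem_of_mem_erase ((Finset.mem_sort _).mp ha))

lemma wordProd_subwordAt_max (ω : List B) (S : Finset (Fin ω.length)) (i : Fin ω.length)
    (hi : i ∈ S) (hmax : ∀ j ∈ S, j ≤ i) :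
    cs.wordProd (subwordAt ω S)
      = cs.wordProd (subwordAt ω (S.erase i)) * cs.simple (ω.get i) := by
  unfold subwordAt
  rw [sort_eq_append_max S i hi hmax, List.map_append, cs.wordProd_append]
  simp

lemma prod_subwordAt_union (ω : List B) :
    ∀ (N : ℕ) (SJ SK : Finset (Fin ω.length)), (SJ ∪ SK).card = N → Disjoint SJ SK →
    (∀ i ∈ SJ, ∀ j ∈ SK, Commute (cs.simple (ω.get i)) (cs.simple (ω.get j))) →
    cs.wordProd (subwordAt ω (SJ ∪ SK))
      = cs.wordProd (subwordAt ω SJ) * cs.wordProd (subwordAt ω SK) := by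
  intro N
  induction N with
  | zero =>
    intro SJ SK hcard _ _
    have hU : SJ ∪ SK = ∅ := Finset.card_eq_zero.mp hcard
    have hJ : SJ = ∅ := (Finset.union_eq_empty.mp hU).1
    have hK : SK = ∅ := (Finset.union_eq_empty.mp hU).2
    rw [hU, hJ, hK]
    simp [subwordAt]
  | succ N ih =>
    intro SJ SK hcard hdisj hcomm
    have hUne : (SJ ∪ SK).Nonempty := Finset.card_pos.mp (by omega)
    set i := (SJ ∪ SK).max' hUne with hidef
    have hiU : i ∈ SJ ∪ SK := (SJ ∪ SK).max'_mem hUne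
    have hmax : ∀ j ∈ SJ ∪ SK, j ≤ i := fun j hj => (SJ ∪ SK).le_max' j hj
    have hcard' : ((SJ ∪ SK).erase i).card = N := by
      rw [Finset.card_erase_of_mem hiU]
      omega
    rcases Finset.mem_union.mp hiU with hiJ | hiK
    · have hiK' : i ∉ SK := fun h => Finset.disjoint_left.mp hdisj hiJ h
      have herase : (SJ ∪ SK).erase i = (SJ.erase i) ∪ SK := by
        rw [Finset.erase_union_distrib, Finset.erase_eq_of_notMem hiK']
      have hdisj' : Disjoint (SJ.erase i) SK := hdisj.mono_left (Finset.erase_subset i SJ)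
      have hcomm' : ∀ a ∈ SJ.erase i, ∀ b ∈ SK,
          Commute (cs.simple (ω.get a)) (cs.simple (ω.get b)) :=
        fun a ha => hcomm a (Finset.mem_of_mem_erase ha)
      have hcommprod : Commute (cs.simple (ω.get i)) (cs.wordProd (subwordAt ω SK)) := by
        rw [CoxeterSystem.wordProd]
        apply Commute.list_prod_right
        intro y hy
        obtain ⟨a, ha, rfl⟩ := List.mem_map.mp hy
        obtain ⟨b, hb, rfl⟩ := mem_subwordAt.mp ha
        exact hcomm i hiJ b hb
      rw [wordProd_subwordAt_max cs ω (SJ ∪ SK) i hiU hmax, herase,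
        ih (SJ.erase i) SK (by rw [← herase]; exact hcard') hdisj' hcomm',
        wordProd_subwordAt_max cs ω SJ i hiJ (fun j hj => hmax j (Finset.mem_union_left _ hj))]
      rw [mul_assoc, mul_assoc, hcommprod.eq]
    · have hiJ' : i ∉ SJ := fun h => Finset.disjoint_left.mp hdisj h hiK
      have herase : (SJ ∪ SK).erase i = SJ ∪ (SK.erase i) := by
        rw [Finset.erase_union_distrib, Finset.erase_eq_of_notMem hiJ']
      have hdisj' : Disjoint SJ (SK.erase i) := hdisj.mono_right (Finset.erase_subset i SK)
      have hcomm' : ∀ a ∈ SJ, ∀ b ∈ SK.erase i,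
          Commute (cs.simple (ω.get a)) (cs.simple (ω.get b)) :=
        fun a ha b hb => hcomm a ha b (Finset.mem_of_mem_erase hb)
      rw [wordProd_subwordAt_max cs ω (SJ ∪ SK) i hiU hmax, herase,
        ih SJ (SK.erase i) (by rw [← herase]; exact hcard') hdisj' hcomm',
        wordProd_subwordAt_max cs ω SK i hiK (fun j hj => hmax j (Finset.mem_union_right _ hj))]
      rw [mul_assoc]

end CoxAux

/-- Let `W` be a Coxeter group, and let `J` and `K` be disjoint sets of simple-reflection
indices such that every simple reflection of `J` commutes with every simple reflection of `K`.
Fix a reduced word `ω` and elements `v_J ∈ W_J`, `v_K ∈ W_K` (so that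
`ℓ(v_J v_K) = ℓ(v_J) + ℓ(v_K)`).  Then a subword of `ω` is a reduced word for `v_J · v_K`
if and only if its index set is the union of the index sets of subwords of `ω` that are
reduced words for `v_J` and `v_K` respectively. -/
theorem subword_reduced_word_for_commuting_product
    {B W : Type*} [DecidableEq B] [Group W] {M : CoxeterMatrix B} (cs : CoxeterSystem M W)
    (J K : Set B) (hdisj : Disjoint J K)
    (hcomm : ∀ j ∈ J, ∀ k ∈ K, Commute (cs.simple j) (cs.simple k))
    (ω : List B) (hred : cs.IsReduced ω)
    (vJ vK : W)
    (hvJ : vJ ∈ Subgroup.closure (cs.simple '' J))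
    (hvK : vK ∈ Subgroup.closure (cs.simple '' K))
    (hlen : cs.length (vJ * vK) = cs.length vJ + cs.length vK) :
    ∀ S : Finset (Fin ω.length),
      (cs.IsReduced (subwordAt ω S) ∧ cs.wordProd (subwordAt ω S) = vJ * vK) ↔
      ∃ SJ SK : Finset (Fin ω.length), S = SJ ∪ SK ∧
        cs.IsReduced (subwordAt ω SJ) ∧ cs.wordProd (subwordAt ω SJ) = vJ ∧
        cs.IsReduced (subwordAt ω SK) ∧ cs.wordProd (subwordAt ω SK) = vK := by
  classical
  intro S
  constructor
  · rintro ⟨hSred, hSprod⟩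
    -- every letter of the subword lies in J ∪ K
    have hJK : vJ * vK ∈ Subgroup.closure (cs.simple '' (J ∪ K)) := by
      rw [Set.image_union]
      exact mul_mem
        (Subgroup.closure_mono Set.subset_union_left hvJ)
        (Subgroup.closure_mono Set.subset_union_right hvK)
    have hlet : ∀ a ∈ subwordAt ω S, a ∈ J ∪ K :=
      CoxAux.isReduced_word_letters cs hSred (hSprod ▸ hJK)
    set SJ : Finset (Fin ω.length) := S.filter (fun i => ω.get i ∈ J) with hSJ
    set SK : Finset (Fin ω.length) := S.filter (fun i => ω.get i ∉ J) with hSK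
    have hunion : SJ ∪ SK = S := Finset.filter_union_filter_not_eq _ S
    have hdisjF : Disjoint SJ SK := Finset.disjoint_filter_filter_not S S _
    have hJlet : ∀ i ∈ SJ, ω.get i ∈ J := fun i hi => (Finset.mem_filter.mp hi).2
    have hKlet : ∀ i ∈ SK, ω.get i ∈ K := by
      intro i hi
      have h1 := (Finset.mem_filter.mp hi).1
      have h2 := (Finset.mem_filter.mp hi).2
      have := hlet (ω.get i) (CoxAux.mem_subwordAt.mpr ⟨i, h1, rfl⟩)
      rcases this with h | h
      · exact absurd h h2
      · exact h
    have hcomm' : ∀ i ∈ SJ, ∀ j ∈ SK,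
        Commute (cs.simple (ω.get i)) (cs.simple (ω.get j)) :=
      fun i hi j hj => hcomm _ (hJlet i hi) _ (hKlet j hj)
    have hsplit : cs.wordProd (subwordAt ω S)
        = cs.wordProd (subwordAt ω SJ) * cs.wordProd (subwordAt ω SK) := by
      rw [← hunion]
      exact CoxAux.prod_subwordAt_union cs ω _ SJ SK rfl hdisjF hcomm'
    set x := cs.wordProd (subwordAt ω SJ) with hx
    set y := cs.wordProd (subwordAt ω SK) with hy
    have hxy : x * y = vJ * vK := by rw [← hsplit, hSprod]
    have hxmem : x ∈ Subgroup.closure (cs.simple '' J) :=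
      CoxAux.wordProd_mem_closure cs (fun a ha => by
        obtain ⟨i, hi, rfl⟩ := CoxAux.mem_subwordAt.mp ha
        exact hJlet i hi)
    have hymem : y ∈ Subgroup.closure (cs.simple '' K) :=
      CoxAux.wordProd_mem_closure cs (fun a ha => by
        obtain ⟨i, hi, rfl⟩ := CoxAux.mem_subwordAt.mp ha
        exact hKlet i hi)
    have hcards : SJ.card + SK.card = S.card := by
      rw [← Finset.card_union_of_disjoint hdisjF, hunion]
    have hxle : cs.length x ≤ SJ.card := by
      rw [hx, ← CoxAux.length_subwordAt ω SJ]
      exact cs.length_wordProd_le _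
    have hyle : cs.length y ≤ SK.card := by
      rw [hy, ← CoxAux.length_subwordAt ω SK]
      exact cs.length_wordProd_le _
    have hScard : cs.length (vJ * vK) = S.card := by
      rw [← hSprod, hSred]
      exact CoxAux.length_subwordAt ω S
    have hge : cs.length (x * y) ≤ cs.length x + cs.length y := cs.length_mul_le x y
    rw [hxy, hScard] at hge
    have hxcard : cs.length x = SJ.card := by omega
    have hycard : cs.length y = SK.card := by omega
    -- identify x = vJ and y = vK
    have hz : vJ⁻¹ * x = vK * y⁻¹ := by
      have : x = vJ * vK * y⁻¹ := by rw [← hxy]; group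
      rw [this]; group
    have hzmemJ : vJ⁻¹ * x ∈ Subgroup.closure (cs.simple '' J) :=
      mul_mem (inv_mem hvJ) hxmem
    have hzmemK : vJ⁻¹ * x ∈ Subgroup.closure (cs.simple '' K) := by
      rw [hz]
      exact mul_mem hvK (inv_mem hymem)
    have hz1 : vJ⁻¹ * x = 1 := CoxAux.closure_inter_eq_one cs hdisj hzmemJ hzmemK
    have hxvJ : x = vJ := by
      have := congrArg (fun w => vJ * w) hz1
      simpa [← mul_assoc] using this
    have hyvK : y = vK := by
      rw [hxvJ] at hxy
      exact mul_left_cancel hxy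
    refine ⟨SJ, SK, hunion.symm, ?_, hxvJ, ?_, hyvK⟩
    · show cs.length (cs.wordProd (subwordAt ω SJ)) = _
      rw [← hx, hxcard, CoxAux.length_subwordAt]
    · show cs.length (cs.wordProd (subwordAt ω SK)) = _
      rw [← hy, hycard, CoxAux.length_subwordAt]
  · rintro ⟨SJ, SK, rfl, hredJ, hprodJ, hredK, hprodK⟩
    have hJlet : ∀ i ∈ SJ, ω.get i ∈ J := by
      intro i hi
      exact CoxAux.isReduced_word_letters cs hredJ (hprodJ ▸ hvJ) (ω.get i)
        (CoxAux.mem_subwordAt.mpr ⟨i, hi, rfl⟩)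
    have hKlet : ∀ i ∈ SK, ω.get i ∈ K := by
      intro i hi
      exact CoxAux.isReduced_word_letters cs hredK (hprodK ▸ hvK) (ω.get i)
        (CoxAux.mem_subwordAt.mpr ⟨i, hi, rfl⟩)
    have hdisjF : Disjoint SJ SK := by
      rw [Finset.disjoint_left]
      intro i hiJ hiK
      exact Set.disjoint_left.mp hdisj (hJlet i hiJ) (hKlet i hiK)
    have hcomm' : ∀ i ∈ SJ, ∀ j ∈ SK,
        Commute (cs.simple (ω.get i)) (cs.simple (ω.get j)) :=
      fun i hi j hj => hcomm _ (hJlet i hi) _ (hKlet j hj)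
    have hsplit : cs.wordProd (subwordAt ω (SJ ∪ SK))
        = cs.wordProd (subwordAt ω SJ) * cs.wordProd (subwordAt ω SK) :=
      CoxAux.prod_subwordAt_union cs ω _ SJ SK rfl hdisjF hcomm'
    constructor
    · show cs.length (cs.wordProd (subwordAt ω (SJ ∪ SK))) = _
      rw [hsplit, hprodJ, hprodK, hlen, CoxAux.length_subwordAt,
        Finset.card_union_of_disjoint hdisjF]
      have h1 : cs.length vJ = SJ.card := by
        rw [← hprodJ, hredJ, CoxAux.length_subwordAt]
      have h2 : cs.length vK = SK.card := by
        rw [← hprodK, hredK, CoxAux.length_subwordAt]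
      omega
    · rw [hsplit, hprodJ, hprodK]
end
end

section
/- For every integer n ≥ 2, the quantity ((n(n+1)/2) · ∑_{i=0}^{n−1} (n+i)!/(n·i!)) / ((2n−1)!/(n−1)!) equals n. -/
lemma hockey_stick (n m : ℕ) :
    ∑ i ∈ Finset.range m, (n + i).choose n = (n + m).choose (n + 1) := by
  induction m with
  | zero => simp [Nat.choose_eq_zero_of_lt]
  | succ m ih =>
      rw [Finset.sum_range_succ, ih, show n + (m + 1) = (n + m) + 1 from rfl,
        Nat.choose_succ_succ]
      simp only [Nat.succ_eq_add_one]
      omega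

lemma key_nat (n : ℕ) (hn : 2 ≤ n) :
    (n + 1) * n.factorial * Nat.choose (2 * n) (n + 1) * (n - 1).factorial
      = 2 * n * (2 * n - 1).factorial := by
  have h2n : 2 * n = (n - 1) + (n + 1) := by omega
  have h := Nat.add_choose_mul_factorial_mul_factorial (n - 1) (n + 1)
  rw [← h2n] at h
  have hfs : (2 * n).factorial = 2 * n * (2 * n - 1).factorial := by
    nth_rewrite 1 [show 2 * n = (2 * n - 1) + 1 by omega]
    rw [Nat.factorial_succ, show 2 * n - 1 + 1 = 2 * n by omega]
  calc (n + 1) * n.factorial * Nat.choose (2 * n) (n + 1) * (n - 1).factorial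
      = Nat.choose (2 * n) (n + 1) * (n + 1).factorial * (n - 1).factorial := by
        rw [Nat.factorial_succ]; ring
    _ = (2 * n).factorial := by rw [← h]; ring
    _ = 2 * n * (2 * n - 1).factorial := hfs

/-- For every integer `n ≥ 2`, the type `Bₙ` Monk structure constant
`((n(n+1)/2) · ∑_{i=0}^{n−1} (n+i)!/(n·i!)) / ((2n−1)!/(n−1)!)` equals `n`. -/
theorem typeB_monk_constant (n : ℕ) (hn : 2 ≤ n) :
    (((n : ℚ) * ((n : ℚ) + 1) / 2) *
        ∑ i ∈ Finset.range n, (Nat.factorial (n + i) : ℚ) / ((n : ℚ) * (Nat.factorial i : ℚ)))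
      / ((Nat.factorial (2 * n - 1) : ℚ) / (Nat.factorial (n - 1) : ℚ)) = (n : ℚ) := by
  have hn0 : (n : ℚ) ≠ 0 := by positivity
  have hsum : ∑ i ∈ Finset.range n, (Nat.factorial (n + i) : ℚ) / ((n : ℚ) * (Nat.factorial i : ℚ))
      = (Nat.choose (2 * n) (n + 1) : ℚ) * (Nat.factorial n : ℚ) / (n : ℚ) := by
    have : ∀ i ∈ Finset.range n,
        (Nat.factorial (n + i) : ℚ) / ((n : ℚ) * (Nat.factorial i : ℚ))
        = ((n + i).choose n : ℚ) * ((Nat.factorial n : ℚ) / (n : ℚ)) := by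
      intro i _
      have h := Nat.add_choose_mul_factorial_mul_factorial i n
      rw [Nat.add_comm i n] at h
      have hfi : (Nat.factorial i : ℚ) ≠ 0 := by
        exact_mod_cast Nat.cast_ne_zero.mpr (Nat.factorial_ne_zero i)
      have hcast : (Nat.factorial (n + i) : ℚ)
          = ((n + i).choose n : ℚ) * (Nat.factorial i : ℚ) * (Nat.factorial n : ℚ) := by
        exact_mod_cast h.symm
      rw [hcast]; field_simp
    rw [Finset.sum_congr rfl this, ← Finset.sum_mul]
    have hhs : ∑ i ∈ Finset.range n, ((n + i).choose n : ℚ) = (Nat.choose (2 * n) (n + 1) : ℚ) := by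
      rw [show 2 * n = n + n by ring]
      exact_mod_cast congrArg (Nat.cast : ℕ → ℚ) (hockey_stick n n)
    rw [hhs]; ring
  rw [hsum]
  have hkey : ((n : ℚ) + 1) * (Nat.factorial n : ℚ) * (Nat.choose (2 * n) (n + 1) : ℚ)
      * (Nat.factorial (n - 1) : ℚ) = 2 * (n : ℚ) * (Nat.factorial (2 * n - 1) : ℚ) := by
    have h := key_nat n hn
    have := congrArg (Nat.cast : ℕ → ℚ) h
    push_cast at this
    linarith [this]
  have hf1 : (Nat.factorial (2 * n - 1) : ℚ) ≠ 0 := by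
    exact_mod_cast Nat.cast_ne_zero.mpr (Nat.factorial_ne_zero _)
  have hf2 : (Nat.factorial (n - 1) : ℚ) ≠ 0 := by
    exact_mod_cast Nat.cast_ne_zero.mpr (Nat.factorial_ne_zero _)
  field_simp
  linear_combination hkey
end
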